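/- Suppose every payoff function p_i is concave and every cost function c_i is convex, so each utility u_i is a concave function of the matrix x. Let T be a collection of subsets of [n] with nonnegative weights (δ_S)_{S∈T} such that Σ_{S∈T : i∈S} δ_S = 1 for every i ∈ [n] (a balanced collection). Let w ∈ ℝ^n be a target utility vector and suppose that for every S ∈ T there is an exchange x^S over S with u_i(x^S) ≥ w_i for every i ∈ S. Define x by x_{i,j} = Σ_{S∈T : i∈S} δ_S · x^S_{i,j}. Then x is a valid data exchange (all entries lie in [0,1]) and u_i(x) ≥ w_i for every i ∈ [n]; i.e., the data-exchange game is balanced. -/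
import Mathlib


open scoped BigOperators

namespace DataExchange

/-- The unit box `[0,1]^n` inside `Fin n → ℝ` (payoff/cost functions live on it;
the coordinate corresponding to the agent herself is always `0`, so this models
`[0,1]^{n-1}`). -/
def box (n : ℕ) : Set (Fin n → ℝ) := Set.Icc 0 1

/-- A data exchange among `n` agents: a matrix with entries in `[0,1]` and zero diagonal. -/
def IsExchange {n : ℕ} (x : Fin n → Fin n → ℝ) : Prop :=
  (∀ i j, 0 ≤ x i j ∧ x i j ≤ 1) ∧ ∀ i, x i i = 0

/-- The incoming bundle `x_{-i} = (x_{j,i})_j` of agent `i`. -/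
def incoming {n : ℕ} (x : Fin n → Fin n → ℝ) (i : Fin n) : Fin n → ℝ := fun j => x j i

/-- The outgoing bundle `x_i = (x_{i,j})_j` of agent `i`. -/
def outgoing {n : ℕ} (x : Fin n → Fin n → ℝ) (i : Fin n) : Fin n → ℝ := fun j => x i j

/-- The utility of agent `i`: payoff on the incoming bundle minus cost of the outgoing bundle. -/
def utility {n : ℕ} (p c : Fin n → (Fin n → ℝ) → ℝ) (x : Fin n → Fin n → ℝ) (i : Fin n) : ℝ :=
  p i (incoming x i) - c i (outgoing x i)

/-- An exchange over a coalition `U`: a data exchange that is zero outside `U × U`. -/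
def IsExchangeOver {n : ℕ} (U : Set (Fin n)) (x : Fin n → Fin n → ℝ) : Prop :=
  IsExchange x ∧ ∀ i j, (i ∉ U ∨ j ∉ U) → x i j = 0

/-- A data exchange is core-stable if no nonempty coalition `U` admits an exchange over `U`
that strictly improves the utility of every member of `U`. -/
def CoreStable {n : ℕ} (p c : Fin n → (Fin n → ℝ) → ℝ) (x : Fin n → Fin n → ℝ) : Prop :=
  ¬ ∃ (U : Set (Fin n)) (y : Fin n → Fin n → ℝ), U.Nonempty ∧ IsExchangeOver U y ∧
      ∀ i ∈ U, utility p c x i < utility p c y i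

/-- `α`-core-stability: no nonempty coalition can improve everyone's utility by more than `α`. -/
def ApproxCoreStable {n : ℕ} (α : ℝ) (p c : Fin n → (Fin n → ℝ) → ℝ)
    (x : Fin n → Fin n → ℝ) : Prop :=
  ¬ ∃ (U : Set (Fin n)) (y : Fin n → Fin n → ℝ), U.Nonempty ∧ IsExchangeOver U y ∧
      ∀ i ∈ U, utility p c x i + α < utility p c y i

/-- Monotone (nondecreasing in every coordinate) on the unit box. -/
def MonotoneOnBox {n : ℕ} (f : (Fin n → ℝ) → ℝ) : Prop :=
  ∀ a ∈ box n, ∀ b ∈ box n, a ≤ b → f a ≤ f b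

/-- **balancedness.** Suppose payoffs are concave and costs are convex on the
box. Let `T` be a balanced collection of coalitions with weights `δ`, let `w` be a target
utility vector, and for each `S ∈ T` let `x^S` be an exchange over `S` attaining `w` on `S`.
Then the weighted combination `x_{i,j} = Σ_{S ∈ T, i ∈ S} δ_S · x^S_{i,j}` is a valid data
exchange and attains `w` for every agent. -/
theorem balanced_game (n : ℕ) (p c : Fin n → (Fin n → ℝ) → ℝ)
    (hp_conc : ∀ i, ConcaveOn ℝ (box n) (p i))
    (hc_conv : ∀ i, ConvexOn ℝ (box n) (c i))
    (T : Finset (Finset (Fin n))) (δ : Finset (Fin n) → ℝ)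
    (hδ : ∀ S ∈ T, 0 ≤ δ S)
    (hbal : ∀ i : Fin n, ∑ S ∈ T.filter (fun S => i ∈ S), δ S = 1)
    (w : Fin n → ℝ)
    (xs : Finset (Fin n) → Fin n → Fin n → ℝ)
    (hxs : ∀ S ∈ T, IsExchangeOver (↑S) (xs S))
    (hws : ∀ S ∈ T, ∀ i ∈ S, w i ≤ utility p c (xs S) i)
    (x : Fin n → Fin n → ℝ)
    (hx : ∀ i j, x i j = ∑ S ∈ T.filter (fun S => i ∈ S), δ S * xs S i j) :
    IsExchange x ∧ ∀ i, w i ≤ utility p c x i := by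
  have hnonneg : ∀ i j, 0 ≤ x i j := by
    intro i j
    rw [hx i j]
    exact Finset.sum_nonneg fun S hS =>
      mul_nonneg (hδ S (Finset.mem_filter.mp hS).1)
        ((hxs S (Finset.mem_filter.mp hS).1).1.1 i j).1
  have hle : ∀ i j, x i j ≤ 1 := by
    intro i j
    rw [hx i j]
    calc ∑ S ∈ T.filter (fun S => i ∈ S), δ S * xs S i j
        ≤ ∑ S ∈ T.filter (fun S => i ∈ S), δ S * 1 := by
          apply Finset.sum_le_sum
          intro S hS
          have hS' := (Finset.mem_filter.mp hS).1
          exact mul_le_mul_of_nonneg_left ((hxs S hS').1.1 i j).2 (hδ S hS')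
      _ = 1 := by simp [hbal i]
  have hdiag : ∀ i, x i i = 0 := by
    intro i
    rw [hx i i]
    apply Finset.sum_eq_zero
    intro S hS
    have hS' := (Finset.mem_filter.mp hS).1
    simp [(hxs S hS').1.2 i]
  refine ⟨⟨fun i j => ⟨hnonneg i j, hle i j⟩, hdiag⟩, ?_⟩
  intro i
  set Ti := T.filter (fun S => i ∈ S) with hTi
  have hδsum : ∑ S ∈ Ti, δ S = 1 := hbal i
  have hδ' : ∀ S ∈ Ti, 0 ≤ δ S := fun S hS => hδ S (Finset.mem_filter.mp hS).1
  have hTmem : ∀ S ∈ Ti, S ∈ T := fun S hS => (Finset.mem_filter.mp hS).1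
  have hiS : ∀ S ∈ Ti, i ∈ S := fun S hS => (Finset.mem_filter.mp hS).2
  -- incoming bundle is the convex combination of incoming bundles
  have hinc : incoming x i = ∑ S ∈ Ti, δ S • incoming (xs S) i := by
    funext j
    simp only [incoming, Finset.sum_apply, Pi.smul_apply, smul_eq_mul]
    rw [hx j i, Finset.sum_filter, Finset.sum_filter]
    apply Finset.sum_congr rfl
    intro S hS
    by_cases hi : i ∈ S <;> by_cases hj : j ∈ S
    · simp [hi, hj]
    · have hz : xs S j i = 0 := (hxs S hS).2 j i (Or.inl (by simpa using hj))
      simp [hi, hj, hz]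
    · have hz : xs S j i = 0 := (hxs S hS).2 j i (Or.inr (by simpa using hi))
      simp [hi, hj, hz]
    · simp [hi, hj]
  have hout : outgoing x i = ∑ S ∈ Ti, δ S • outgoing (xs S) i := by
    funext j
    simp only [outgoing, Finset.sum_apply, Pi.smul_apply, smul_eq_mul]
    exact hx i j
  have hmem : ∀ S ∈ Ti, incoming (xs S) i ∈ box n := by
    intro S hS
    constructor
    · intro j; exact ((hxs S (hTmem S hS)).1.1 j i).1
    · intro j; exact ((hxs S (hTmem S hS)).1.1 j i).2
  have hmem' : ∀ S ∈ Ti, outgoing (xs S) i ∈ box n := by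
    intro S hS
    constructor
    · intro j; exact ((hxs S (hTmem S hS)).1.1 i j).1
    · intro j; exact ((hxs S (hTmem S hS)).1.1 i j).2
  have hp_le : ∑ S ∈ Ti, δ S * p i (incoming (xs S) i) ≤ p i (incoming x i) := by
    rw [hinc]
    exact (hp_conc i).le_map_sum hδ' hδsum hmem
  have hc_le : c i (outgoing x i) ≤ ∑ S ∈ Ti, δ S * c i (outgoing (xs S) i) := by
    rw [hout]
    exact (hc_conv i).map_sum_le hδ' hδsum hmem'
  have hu : ∑ S ∈ Ti, δ S * utility p c (xs S) i ≤ utility p c x i := by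
    unfold utility
    have : ∑ S ∈ Ti, δ S * (p i (incoming (xs S) i) - c i (outgoing (xs S) i))
        = ∑ S ∈ Ti, δ S * p i (incoming (xs S) i)
          - ∑ S ∈ Ti, δ S * c i (outgoing (xs S) i) := by
      rw [← Finset.sum_sub_distrib]
      apply Finset.sum_congr rfl
      intro S _
      ring
    rw [this]
    linarith
  calc w i = ∑ S ∈ Ti, δ S * w i := by rw [← Finset.sum_mul, hδsum, one_mul]
    _ ≤ ∑ S ∈ Ti, δ S * utility p c (xs S) i := by
        apply Finset.sum_le_sum
        intro S hS
        exact mul_le_mul_of_nonneg_left (hws S (hTmem S hS) i (hiS S hS)) (hδ' S hS)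
    _ ≤ utility p c x i := hu

end DataExchange
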